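/- arXiv:1605.01298 — 10 statements merged into one kernel-verified Lean document; each statement's English description precedes it below -/
import Mathlib

section
/- Let R be a domain with more elements than units (as cardinals, #R > #R^×). Then for every nonzero x ∈ R there exists y ∈ R such that yx + 1 is not a unit. -/
theorem stmt_0 (R : Type*) [CommRing R] [IsDomain R]
    (h : Cardinal.mk Rˣ < Cardinal.mk R) :
    ∀ x : R, x ≠ 0 → ∃ y : R, ¬ IsUnit (y * x + 1) := by
  intro x hx
  by_contra hc
  push_neg at hc
  have hinj : Function.Injective (fun y : R => (hc y).unit) := by
    intro a b hab
    have : a * x + 1 = b * x + 1 := by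
      have := congrArg (Units.val) hab
      simpa [IsUnit.unit_spec] using this
    have : (a - b) * x = 0 := by ring_nf; linear_combination this
    exact sub_eq_zero.mp ((mul_eq_zero.mp this).resolve_right hx)
  exact absurd (Cardinal.mk_le_of_injective hinj) (not_le.mpr h)
end

section
/- Let R be a domain, not a field, satisfying Condition (E). Then there is an infinite sequence (a_n) of nonunits of R that are pairwise comaximal: (a_i) + (a_j) = R for all i ≠ j. -/
theorem stmt_1 (R : Type*) [CommRing R] [IsDomain R] (hnf : ¬ IsField R)
    (hE : ∀ x : R, x ≠ 0 → ∃ y : R, ¬ IsUnit (y * x + 1)) :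
    ∃ a : ℕ → R, (∀ n, ¬ IsUnit (a n)) ∧
      (∀ m n, m ≠ n → Ideal.span {a m} ⊔ Ideal.span {a n} = ⊤) := by
  classical
  obtain ⟨a₀, ha₀ne, ha₀nu⟩ := Ring.exists_not_isUnit_of_not_isField hnf
  set g : R → R := fun p => if h : p ≠ 0 then Classical.choose (hE p h) else 0 with hgdef
  have hg : ∀ p : R, p ≠ 0 → ¬ IsUnit (g p * p + 1) := by
    intro p hp
    simp only [hgdef, dif_pos hp]
    exact Classical.choose_spec (hE p hp)
  set f : ℕ → R × R := fun n =>
    Nat.rec (a₀, a₀)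
      (fun _ ih => (g ih.2 * ih.2 + 1, ih.2 * (g ih.2 * ih.2 + 1))) n with hfdef
  have hf0 : f 0 = (a₀, a₀) := rfl
  have hfs : ∀ n, f (n + 1) =
      (g (f n).2 * (f n).2 + 1, (f n).2 * (g (f n).2 * (f n).2 + 1)) := fun n => rfl
  -- invariant: second component nonzero and nonunit
  have hp : ∀ n, (f n).2 ≠ 0 ∧ ¬ IsUnit (f n).2 := by
    intro n
    induction n with
    | zero => exact ⟨ha₀ne, ha₀nu⟩
    | succ n ih =>
      have hane : g (f n).2 * (f n).2 + 1 ≠ 0 := by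
        intro h0
        apply ih.2
        exact IsUnit.of_mul_eq_one (-(g (f n).2)) (by linear_combination -h0)
      rw [hfs n]
      constructor
      · exact mul_ne_zero ih.1 hane
      · intro hu
        exact ih.2 (isUnit_of_mul_isUnit_left hu)
  -- each a n is a nonunit
  have hanu : ∀ n, ¬ IsUnit (f n).1 := by
    intro n
    cases n with
    | zero => exact ha₀nu
    | succ n => rw [hfs n]; exact hg _ (hp n).1
  -- divisibility: (f i).1 ∣ (f n).2 for i ≤ n
  have hdvd : ∀ n i, i ≤ n → (f i).1 ∣ (f n).2 := by
    intro n
    induction n with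
    | zero => intro i hi; interval_cases i; exact dvd_refl _
    | succ n ih =>
      intro i hi
      rcases Nat.lt_or_ge i (n + 1) with h | h
      · have := ih i (Nat.lt_succ_iff.mp h)
        rw [hfs n]
        exact this.mul_right _
      · have : i = n + 1 := le_antisymm hi h
        subst this
        rw [hfs n]
        exact Dvd.intro_left _ rfl
  -- comaximality for i < n
  have hcomax : ∀ i n, i < n → Ideal.span {(f i).1} ⊔ Ideal.span {(f n).1} = ⊤ := by
    intro i n hin
    obtain ⟨m, rfl⟩ := Nat.exists_eq_add_of_lt hin
    rw [Ideal.eq_top_iff_one]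
    set p := (f (i + m)).2 with hpdef
    have h1 : (f (i + m + 1)).1 = g p * p + 1 := by rw [hfs]
    have h2 : (f i).1 ∣ p := hdvd (i + m) i (Nat.le_add_right _ _)
    apply Submodule.mem_sup.mpr
    refine ⟨-(g p * p), ?_, (f (i + m + 1)).1, ?_, ?_⟩
    · rw [Ideal.mem_span_singleton]
      exact (h2.mul_left _).neg_right
    · exact Ideal.mem_span_singleton_self _
    · rw [h1]; ring
  refine ⟨fun n => (f n).1, hanu, ?_⟩
  intro m n hmn
  rcases Nat.lt_or_ge m n with h | h
  · exact hcomax m n h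
  · have h' : n < m := lt_of_le_of_ne h (Ne.symm hmn)
    rw [sup_comm]
    exact hcomax n m h'
end

section
/- Let R be a Furstenberg domain, not a field, satisfying Condition (E). Then R admits an infinite sequence (f_n) of pairwise comaximal irreducible elements; in particular the principal ideals (f_n) are pairwise distinct, so R has infinitely many atoms. -/
theorem stmt_2 (R : Type*) [CommRing R] [IsDomain R] (hnf : ¬ IsField R)
    (hF : ∀ x : R, x ≠ 0 → ¬ IsUnit x → ∃ f : R, Irreducible f ∧ f ∣ x)
    (hE : ∀ x : R, x ≠ 0 → ∃ y : R, ¬ IsUnit (y * x + 1)) :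
    ∃ f : ℕ → R, (∀ n, Irreducible (f n)) ∧
      (∀ m n, m ≠ n → Ideal.span {f m} ⊔ Ideal.span {f n} = ⊤) ∧
      Function.Injective (fun n => Ideal.span {f n}) := by
  classical
  obtain ⟨x0, hx0ne, hx0nu⟩ : ∃ x : R, x ≠ 0 ∧ ¬IsUnit x := by
    by_contra h
    push_neg at h
    exact hnf ⟨exists_pair_ne R, mul_comm, fun ha => (h _ ha).exists_right_inv⟩
  obtain ⟨g0, hg0, -⟩ := hF x0 hx0ne hx0nu
  have key : ∀ x : R, ∃ g y : R, Irreducible g ∧ (x ≠ 0 → ¬IsUnit x → g ∣ y * x + 1) := by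
    intro x
    by_cases hx : x ≠ 0 ∧ ¬IsUnit x
    · obtain ⟨y, hy⟩ := hE x hx.1
      have hz : y * x + 1 ≠ 0 := by
        intro h0
        apply hx.2
        exact IsUnit.of_mul_eq_one (a := x) (-y) (by linear_combination -h0)
      obtain ⟨g, hg, hgd⟩ := hF _ hz hy
      exact ⟨g, y, hg, fun _ _ => hgd⟩
    · exact ⟨g0, 0, hg0, fun h1 h2 => absurd ⟨h1, h2⟩ hx⟩
  choose G Y hGirr hGdvd using key
  set p : ℕ → R := fun n => Nat.rec x0 (fun _ q => q * G q) n with hp_def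
  have hp_succ : ∀ n, p (n + 1) = p n * G (p n) := fun n => rfl
  have hp : ∀ n, p n ≠ 0 ∧ ¬IsUnit (p n) := by
    intro n
    induction n with
    | zero => exact ⟨hx0ne, hx0nu⟩
    | succ k ih =>
      rw [hp_succ]
      constructor
      · exact mul_ne_zero ih.1 (hGirr (p k)).ne_zero
      · intro hu
        exact ih.2 (isUnit_of_mul_isUnit_left hu)
  have hdvd : ∀ n, G (p n) ∣ Y (p n) * p n + 1 := fun n => hGdvd _ (hp n).1 (hp n).2
  have hstep : ∀ m n, m < n → G (p m) ∣ p n := by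
    intro m n hmn
    induction n with
    | zero => omega
    | succ k ih =>
      rw [hp_succ]
      rcases Nat.lt_succ_iff_lt_or_eq.mp hmn with h | h
      · exact (ih h).mul_right _
      · subst h; exact Dvd.intro_left _ rfl
  refine ⟨fun n => G (p n), fun n => hGirr _, ?_, ?_⟩
  · have comax : ∀ m n, m < n →
        Ideal.span {G (p m)} ⊔ Ideal.span {G (p n)} = ⊤ := by
      intro m n hmn
      rw [Ideal.eq_top_iff_one]
      rw [Submodule.mem_sup]
      refine ⟨-(Y (p n) * p n), ?_, Y (p n) * p n + 1, ?_, by ring⟩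
      · rw [Ideal.mem_span_singleton]
        exact ((hstep m n hmn).mul_left _).neg_right
      · rw [Ideal.mem_span_singleton]
        exact hdvd n
    intro m n hmn
    rcases lt_or_gt_of_ne hmn with h | h
    · exact comax m n h
    · rw [sup_comm]; exact comax n m h
  · intro m n hmn
    by_contra hne
    simp only at hmn
    have : Ideal.span {G (p m)} ⊔ Ideal.span {G (p n)} = ⊤ := by
      have comax : ∀ a b, a < b → Ideal.span {G (p a)} ⊔ Ideal.span {G (p b)} = ⊤ := by
        intro a b hab
        rw [Ideal.eq_top_iff_one, Submodule.mem_sup]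
        refine ⟨-(Y (p b) * p b), ?_, Y (p b) * p b + 1, ?_, by ring⟩
        · rw [Ideal.mem_span_singleton]
          exact ((hstep a b hab).mul_left _).neg_right
        · rw [Ideal.mem_span_singleton]
          exact hdvd b
      rcases lt_or_gt_of_ne hne with h | h
      · exact comax m n h
      · rw [sup_comm]; exact comax n m h
    rw [hmn, sup_idem, Ideal.span_singleton_eq_top] at this
    exact (hGirr (p n)).not_isUnit this
end

section
/- Let R be a Furstenberg domain, not a field, with #R > #R^×. Then R has infinitely many atoms (pairwise nonassociate irreducibles). -/
theorem stmt_6 (R : Type*) [CommRing R] [IsDomain R] (hnf : ¬ IsField R)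
    (hF : ∀ x : R, x ≠ 0 → ¬ IsUnit x → ∃ f : R, Irreducible f ∧ f ∣ x)
    (hcard : Cardinal.mk Rˣ < Cardinal.mk R) :
    ∃ f : ℕ → R, (∀ n, Irreducible (f n)) ∧
      ∀ m n, m ≠ n → ¬ Associated (f m) (f n) := by
  have hSinf : {a : Associates R | Irreducible a}.Infinite := by
    by_contra hfin
    rw [Set.not_infinite] at hfin
    set t := hfin.toFinset with ht
    set P : R := ∏ a ∈ t, Quot.out a with hP
    have hPirr : ∀ a ∈ t, Irreducible (Quot.out a) := by
      intro a ha
      have h1 : Irreducible a := by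
        have := (Set.Finite.mem_toFinset hfin).mp ha
        simpa using this
      rwa [← Associates.quot_out a, Associates.irreducible_mk] at h1
    have hPne : P ≠ 0 := by
      rw [hP]; refine Finset.prod_ne_zero_iff.mpr ?_
      exact fun a ha => (hPirr a ha).ne_zero
    have hdvd : ∀ q : R, Irreducible q → q ∣ P := by
      intro q hq
      have hmem : Associates.mk q ∈ t := by
        rw [ht, Set.Finite.mem_toFinset]
        simpa [Associates.irreducible_mk] using hq
      have h1 : Quot.out (Associates.mk q) ∣ P := Finset.dvd_prod_of_mem _ hmem
      exact ((Associates.mk_quot_out q).symm.dvd).trans h1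
    have himg : ∀ r : R, 1 + P * r = 0 ∨ IsUnit (1 + P * r) := by
      intro r
      by_contra hc
      push_neg at hc
      obtain ⟨q, hq, hqd⟩ := hF _ hc.1 hc.2
      have h1 : q ∣ 1 := by
        have := hqd.sub ((hdvd q hq).mul_right r)
        simpa using this
      exact hq.not_isUnit (isUnit_of_dvd_one h1)
    have hle : Cardinal.mk R ≤ Cardinal.mk (insert (0:R) {x : R | IsUnit x} : Set R) := by
      apply Cardinal.mk_le_of_injective
        (f := fun r : R => (⟨1 + P * r, by
          simpa [Set.mem_insert_iff] using himg r⟩ :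
          (insert (0:R) {x : R | IsUnit x} : Set R)))
      intro a b hab
      have h2 : 1 + P * a = 1 + P * b := congrArg Subtype.val hab
      exact mul_left_cancel₀ hPne (add_left_cancel h2)
    have hunits : Cardinal.mk {x : R | IsUnit x} = Cardinal.mk Rˣ := by
      refine (Cardinal.mk_congr (Equiv.ofBijective (fun u : Rˣ => ⟨(u : R), u.isUnit⟩) ?_)).symm
      constructor
      · intro a b hab
        exact Units.ext (congrArg Subtype.val hab)
      · rintro ⟨x, u, rfl⟩
        exact ⟨u, rfl⟩
    have hle2 : Cardinal.mk R ≤ Cardinal.mk Rˣ + 1 := by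
      calc Cardinal.mk R ≤ Cardinal.mk (insert (0:R) {x : R | IsUnit x} : Set R) := hle
        _ ≤ Cardinal.mk {x : R | IsUnit x} + 1 := Cardinal.mk_insert_le
        _ = Cardinal.mk Rˣ + 1 := by rw [hunits]
    by_cases hfinU : Cardinal.mk Rˣ < Cardinal.aleph0
    · have hRfin : Cardinal.mk R < Cardinal.aleph0 :=
        lt_of_le_of_lt hle2 (Cardinal.add_lt_aleph0 hfinU Cardinal.one_lt_aleph0)
      haveI : Finite R := Cardinal.mk_lt_aleph0_iff.mp hRfin
      exact hnf (Finite.isField_of_domain R)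
    · push_neg at hfinU
      rw [Cardinal.add_one_eq hfinU] at hle2
      exact absurd hle2 (not_le.mpr hcard)
  let e := Set.Infinite.natEmbedding _ hSinf
  refine ⟨fun n => Quot.out ((e n : Associates R)), ?_, ?_⟩
  · intro n
    have h1 : Irreducible ((e n : Associates R)) := (e n).2
    rwa [← Associates.quot_out ((e n : Associates R)), Associates.irreducible_mk] at h1
  · intro m n hmn hassoc
    apply hmn
    have : (e m : Associates R) = (e n : Associates R) := by
      rw [← Associates.quot_out ((e m : Associates R)),
        ← Associates.quot_out ((e n : Associates R))]
      exact Associates.mk_eq_mk_iff_associated.mpr hassoc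
    exact e.injective (Subtype.ext this)
end

section
/- Let R be a Furstenberg domain. Then the set of irreducible elements of R is either empty (exactly when R is a field) or infinite. -/
theorem stmt_7 (R : Type*) [CommRing R] [IsDomain R]
    (hF : ∀ x : R, x ≠ 0 → ¬ IsUnit x → ∃ f : R, Irreducible f ∧ f ∣ x) :
    ({x : R | Irreducible x} = ∅ ↔ IsField R) ∧
      (¬ IsField R → {x : R | Irreducible x}.Infinite) := by
  have hfield : ∀ (h : ∀ a : R, a ≠ 0 → IsUnit a), IsField R := by
    intro h
    refine ⟨exists_pair_ne R, mul_comm, fun {a} ha => ?_⟩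
    obtain ⟨u, rfl⟩ := h a ha
    exact ⟨↑u⁻¹, by simp⟩
  have main : ¬ IsField R → {x : R | Irreducible x}.Infinite := by
    intro hnf
    -- get a nonzero nonunit
    have : ∃ a : R, a ≠ 0 ∧ ¬ IsUnit a := by
      by_contra h
      push_neg at h
      exact hnf (hfield fun a ha => h a ha)
    obtain ⟨a, ha0, hau⟩ := this
    obtain ⟨p, hp, -⟩ := hF a ha0 hau
    intro hfin
    -- units are finite
    have hUinj : Function.Injective (fun u : Rˣ => (⟨(u : R) * p, (irreducible_units_mul u).2 hp⟩ : {x : R | Irreducible x})) := by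
      intro u v huv
      simp only [Subtype.mk.injEq, mul_eq_mul_right_iff] at huv
      exact Units.ext (huv.resolve_right hp.ne_zero)
    haveI : Finite {x : R | Irreducible x} := hfin
    haveI hUfin : Finite Rˣ := Finite.of_injective _ hUinj
    -- the product of all irreducibles
    set m : R := ∏ x ∈ hfin.toFinset, x with hm
    have hmne : m ≠ 0 := Finset.prod_ne_zero_iff.2 fun x hx => by
      simpa using (hfin.mem_toFinset.1 hx).ne_zero
    have hmdvd : ∀ q : R, Irreducible q → q ∣ m :=
      fun q hq => Finset.dvd_prod_of_mem _ (hfin.mem_toFinset.2 hq)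
    have hmu : ¬ IsUnit m := fun h => hp.not_isUnit (isUnit_of_dvd_unit (hmdvd p hp) h)
    -- each 1 + m^(k+1) is zero or a unit
    have key : ∀ k : ℕ, (1 + m ^ (k + 1) = 0) ∨ IsUnit (1 + m ^ (k + 1)) := by
      intro k
      by_contra h
      push_neg at h
      obtain ⟨q, hq, hqd⟩ := hF _ h.1 h.2
      have h1 : q ∣ m ^ (k + 1) := (hmdvd q hq).trans (dvd_pow_self m (Nat.succ_ne_zero k))
      have : q ∣ (1 : R) := by
        have := dvd_sub hqd h1
        simpa using this
      exact hq.not_isUnit (isUnit_of_dvd_one this)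
    -- injectivity
    have hinj : Function.Injective (fun k : ℕ => 1 + m ^ (k + 1)) := by
      intro j k hjk
      simp only at hjk
      have := pow_injective_of_not_isUnit hmu hmne (add_left_cancel hjk)
      omega
    -- image lies in {0} ∪ units, a finite set
    have hsub : Set.range (fun k : ℕ => 1 + m ^ (k + 1)) ⊆ {0} ∪ {x : R | IsUnit x} := by
      rintro _ ⟨k, rfl⟩
      rcases key k with h | h
      · exact Or.inl h
      · exact Or.inr h
    have hfin2 : ({0} ∪ {x : R | IsUnit x} : Set R).Finite := by
      apply Set.Finite.union (Set.finite_singleton 0)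
      have : {x : R | IsUnit x} ⊆ Set.range (fun u : Rˣ => (u : R)) := by
        rintro x ⟨u, rfl⟩; exact ⟨u, rfl⟩
      exact (Set.finite_range _).subset this
    exact Set.infinite_of_injective_forall_mem hinj (fun k => hsub ⟨k, rfl⟩) (hfin2.subset (by exact fun x hx => hx))
  constructor
  · constructor
    · intro hemp
      apply hfield
      intro a ha0
      by_contra hau
      obtain ⟨f, hf, -⟩ := hF a ha0 hau
      exact (Set.eq_empty_iff_forall_notMem.1 hemp f) hf
    · intro hf
      ext x
      simp only [Set.mem_setOf_eq, Set.mem_empty_iff_false, iff_false]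
      intro hx
      obtain ⟨b, hb⟩ := hf.3 hx.ne_zero
      exact hx.not_isUnit (IsUnit.of_mul_eq_one (a := x) b hb)
  · exact main
end

section
/- Let R be a domain, not a field, satisfying Condition (E). For every polynomial at + b ∈ R[t] with a ≠ 0, there exists x ∈ R such that ax + b is a nonzero nonunit. -/
theorem stmt_9 (R : Type*) [CommRing R] [IsDomain R] (hnf : ¬ IsField R)
    (hE : ∀ x : R, x ≠ 0 → ∃ y : R, ¬ IsUnit (y * x + 1))
    (a b : R) (ha : a ≠ 0) :
    ∃ x : R, a * x + b ≠ 0 ∧ ¬ IsUnit (a * x + b) := by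
  obtain ⟨n, hn0, hnu⟩ : ∃ n : R, n ≠ 0 ∧ ¬ IsUnit n := by
    by_contra h
    push_neg at h
    exact hnf ⟨exists_pair_ne R, mul_comm, fun ha => (h _ ha).exists_right_inv⟩
  by_cases hau : IsUnit a
  · obtain ⟨u, rfl⟩ := hau
    have key : (u : R) * ((u⁻¹ : Rˣ) * (n - b)) + b = n := by
      rw [← mul_assoc, Units.mul_inv, one_mul, sub_add_cancel]
    exact ⟨(u⁻¹ : Rˣ) * (n - b), by rw [key]; exact hn0, by rw [key]; exact hnu⟩
  · obtain ⟨y, hy⟩ := hE a ha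
    have hyne : y * a + 1 ≠ 0 := by
      intro h0
      apply hau
      exact IsUnit.of_mul_eq_one (a := a) (-y) (by linear_combination -h0)
    by_cases hb : b = 0
    · subst hb
      refine ⟨n, ?_, ?_⟩
      · simpa using mul_ne_zero ha hn0
      · rw [add_zero]
        intro h
        exact hnu (isUnit_of_mul_isUnit_right h)
    · refine ⟨b * y, ?_, ?_⟩
      · have : a * (b * y) + b = b * (y * a + 1) := by ring
        rw [this]
        exact mul_ne_zero hb hyne
      · have : a * (b * y) + b = b * (y * a + 1) := by ring
        rw [this]
        intro h
        exact hy (isUnit_of_mul_isUnit_right h)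
end

section
/- Let R be an atomic domain satisfying Condition (E), let I be a nonzero ideal of R, and let H be a proper subgroup of the unit group (R/I)^×. Then there are infinitely many pairwise comaximal irreducibles f of R such that the class of f modulo I lies in (R/I)^× \ H. -/
theorem stmt_10 (R : Type*) [CommRing R] [IsDomain R]
    (hatomic : ∀ x : R, x ≠ 0 → ¬ IsUnit x →
      ∃ s : Multiset R, (∀ f ∈ s, Irreducible f) ∧ s.prod = x)
    (hE : ∀ x : R, x ≠ 0 → ∃ y : R, ¬ IsUnit (y * x + 1))
    (I : Ideal R) (hI : I ≠ ⊥) (H : Subgroup (R ⧸ I)ˣ) (hH : H ≠ ⊤) :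
    ∃ f : ℕ → R, (∀ n, Irreducible (f n)) ∧
      (∀ m n, m ≠ n → Ideal.span {f m} ⊔ Ideal.span {f n} = ⊤) ∧
      (∀ n, ∃ u : (R ⧸ I)ˣ, (u : R ⧸ I) = Ideal.Quotient.mk I (f n) ∧ u ∉ H) := by
  classical
  set π := Ideal.Quotient.mk I with hπdef
  -- I ≠ ⊤ (otherwise quotient is trivial and H = ⊤)
  have hIT : I ≠ ⊤ := by
    intro h
    apply hH
    have hsub : Subsingleton (R ⧸ I) := by
      refine ⟨fun a b => ?_⟩
      obtain ⟨a', rfl⟩ := Ideal.Quotient.mk_surjective a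
      obtain ⟨b', rfl⟩ := Ideal.Quotient.mk_surjective b
      rw [Ideal.Quotient.eq, h]
      exact Submodule.mem_top
    refine (Subgroup.eq_top_iff' H).mpr fun u => ?_
    have : u = 1 := Units.ext (Subsingleton.elim _ _)
    rw [this]; exact H.one_mem
  haveI : Nontrivial (R ⧸ I) := Ideal.Quotient.nontrivial_iff.mpr hIT
  obtain ⟨u₀, hu₀⟩ : ∃ u : (R ⧸ I)ˣ, u ∉ H := by
    by_contra h
    push_neg at h
    exact hH ((Subgroup.eq_top_iff' H).mpr h)
  obtain ⟨r, hr⟩ : ∃ r, π r = ↑u₀ := Ideal.Quotient.mk_surjective _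
  obtain ⟨a, haI, ha0⟩ : ∃ a ∈ I, a ≠ (0 : R) := (Submodule.ne_bot_iff I).mp hI
  have hu₀0 : (↑u₀ : R ⧸ I) ≠ 0 := fun h => not_isUnit_zero (h ▸ u₀.isUnit)
  -- closure of H under factorizations
  have key : ∀ s : Multiset R, (∀ g ∈ s, ∃ u : (R ⧸ I)ˣ, (u : R ⧸ I) = π g ∧ u ∈ H) →
      ∀ u : (R ⧸ I)ˣ, (u : R ⧸ I) = π s.prod → u ∈ H := by
    intro s
    induction s using Multiset.induction_on with
    | empty =>
      intro _ u hu
      have : u = 1 := Units.ext (by simpa using hu)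
      rw [this]; exact H.one_mem
    | cons g t ih =>
      intro hs u hu
      obtain ⟨ug, hug, hugH⟩ := hs g (Multiset.mem_cons_self g t)
      have ht : ∀ g' ∈ t, ∃ u : (R ⧸ I)ˣ, (u : R ⧸ I) = π g' ∧ u ∈ H :=
        fun g' hg' => hs g' (Multiset.mem_cons_of_mem hg')
      have h2 : ((ug⁻¹ * u : (R ⧸ I)ˣ) : R ⧸ I) = π t.prod := by
        rw [Units.val_mul, hu, Multiset.prod_cons, map_mul, ← hug, ← mul_assoc,
          Units.inv_mul, one_mul]
      have hmem := ih ht _ h2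
      rw [← mul_inv_cancel_left ug u]
      exact H.mul_mem hugH hmem
  -- the key step: given c with unit class mod I, produce a new irreducible
  have step : ∀ c : R, IsUnit (π c) → ∃ g, Irreducible g ∧
      (∃ u : (R ⧸ I)ˣ, (u : R ⧸ I) = π g ∧ u ∉ H) ∧
      Ideal.span {g} ⊔ Ideal.span {c} = ⊤ := by
    intro c hc
    have hc0 : c ≠ 0 := by
      rintro rfl
      rw [map_zero] at hc
      exact not_isUnit_zero hc
    obtain ⟨w, hw⟩ : ∃ w, π w = ↑hc.unit⁻¹ := Ideal.Quotient.mk_surjective _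
    set x := 1 + c * w * (r - 1) with hx
    have h1 : π c * π w = 1 := by
      rw [hw]
      calc π c * (↑hc.unit⁻¹ : R ⧸ I) = ↑hc.unit * ↑hc.unit⁻¹ := by rw [hc.unit_spec]
        _ = 1 := Units.mul_inv _
    have hπx : π x = ↑u₀ := by
      simp only [hx, map_add, map_mul, map_one, map_sub]
      calc (1 : R ⧸ I) + π c * π w * (π r - 1) = 1 + 1 * (π r - 1) := by rw [h1]
        _ = π r := by ring
        _ = ↑u₀ := hr
    have hd0 : a * c ≠ 0 := mul_ne_zero ha0 hc0
    have hπac : π (a * c) = 0 := by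
      rw [map_mul, Ideal.Quotient.eq_zero_iff_mem.mpr haI, zero_mul]
    obtain ⟨z, hz1, hz0, hzu, hzπ⟩ : ∃ z, (c ∣ z - 1) ∧ z ≠ 0 ∧ ¬ IsUnit z ∧ π z = ↑u₀ := by
      by_cases hxu : IsUnit x
      · obtain ⟨y, hy⟩ := hE ((↑hxu.unit⁻¹ : R) * (a * c))
          (mul_ne_zero (Units.ne_zero _) hd0)
        have e1 : x * ↑hxu.unit⁻¹ = 1 := by
          calc x * (↑hxu.unit⁻¹ : R) = ↑hxu.unit * ↑hxu.unit⁻¹ := by rw [hxu.unit_spec]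
            _ = 1 := Units.mul_inv _
        have hzeq : x + y * (a * c) = x * (y * (↑hxu.unit⁻¹ * (a * c)) + 1) := by
          linear_combination (-(y * (a * c))) * e1
        refine ⟨x + y * (a * c), ⟨w * (r - 1) + y * a, by rw [hx]; ring⟩, ?_, ?_, ?_⟩
        · intro h0
          apply hu₀0
          rw [← hπx]
          have : π (x + y * (a * c)) = 0 := by rw [h0, map_zero]
          rw [map_add, map_mul, hπac, mul_zero, add_zero] at this
          exact this
        · intro h
          rw [hzeq] at h
          exact hy (isUnit_of_mul_isUnit_right h)
        · rw [map_add, map_mul, hπac, mul_zero, add_zero, hπx]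
      · refine ⟨x, ⟨w * (r - 1), by rw [hx]; ring⟩, ?_, hxu, hπx⟩
        intro h0
        apply hu₀0
        rw [← hπx, h0, map_zero]
    obtain ⟨s, hs_irr, hs_prod⟩ := hatomic z hz0 hzu
    have hπz : π s.prod = ↑u₀ := by rw [hs_prod]; exact hzπ
    have hunit : ∀ g ∈ s, IsUnit (π g) := by
      intro g hg
      have hdvd : π g ∣ π s.prod := by
        rw [map_multiset_prod]
        exact Multiset.dvd_prod (Multiset.mem_map_of_mem _ hg)
      exact isUnit_of_dvd_unit hdvd (hπz ▸ u₀.isUnit)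
    obtain ⟨g, hgs, u, hgu, hguH⟩ : ∃ g ∈ s, ∃ u : (R ⧸ I)ˣ, (u : R ⧸ I) = π g ∧ u ∉ H := by
      by_contra hcon
      push_neg at hcon
      apply hu₀
      refine key s ?_ u₀ hπz.symm
      intro g hg
      obtain ⟨ug, hug⟩ := hunit g hg
      exact ⟨ug, hug, hcon g hg ug hug⟩
    refine ⟨g, hs_irr g hgs, ⟨u, hgu, hguH⟩, ?_⟩
    by_contra hne
    obtain ⟨M, hM, hle⟩ := Ideal.exists_le_maximal _ hne
    have hzM : z ∈ M := hle (Ideal.mem_sup_left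
      (Ideal.mem_span_singleton.mpr (hs_prod ▸ Multiset.dvd_prod hgs)))
    have hz1M : z - 1 ∈ M := hle (Ideal.mem_sup_right (Ideal.mem_span_singleton.mpr hz1))
    have h1M : (1 : R) ∈ M := by
      have := M.sub_mem hzM hz1M
      simpa using this
    exact hM.ne_top ((Ideal.eq_top_iff_one M).mpr h1M)
  -- make step total, then choose
  have step' : ∀ c : R, ∃ g : R, IsUnit (π c) → Irreducible g ∧
      (∃ u : (R ⧸ I)ˣ, (u : R ⧸ I) = π g ∧ u ∉ H) ∧
      Ideal.span {g} ⊔ Ideal.span {c} = ⊤ := by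
    intro c
    by_cases h : IsUnit (π c)
    · exact ⟨(step c h).choose, fun _ => (step c h).choose_spec⟩
    · exact ⟨1, fun h' => absurd h' h⟩
  choose next next_spec using step'
  let go : ℕ → R × R := fun n =>
    Nat.rec (next 1, next 1) (fun _ p => (next p.2, p.2 * next p.2)) n
  have hgo0 : go 0 = (next 1, next 1) := rfl
  have hgoS : ∀ n, go (n + 1) = (next (go n).2, (go n).2 * next (go n).2) := fun n => rfl
  have hone : IsUnit (π (1 : R)) := by rw [map_one]; exact isUnit_one
  have inv : ∀ n, IsUnit (π (go n).2) ∧ Irreducible (go n).1 ∧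
      (∃ u : (R ⧸ I)ˣ, (u : R ⧸ I) = π ((go n).1) ∧ u ∉ H) ∧
      (∀ m, m ≤ n → (go m).1 ∣ (go n).2) ∧
      (∀ m, m < n → Ideal.span {(go n).1} ⊔ Ideal.span {(go m).1} = ⊤) := by
    intro n
    induction n with
    | zero =>
      obtain ⟨hirr, hu, -⟩ := next_spec 1 hone
      rw [hgo0]
      refine ⟨?_, hirr, hu, ?_, ?_⟩
      · obtain ⟨u, hu', -⟩ := hu
        exact hu' ▸ u.isUnit
      · intro m hm
        have : m = 0 := Nat.le_zero.mp hm
        rw [this, hgo0]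
      · intro m hm
        exact absurd hm (Nat.not_lt_zero m)
    | succ n ih =>
      obtain ⟨hcu, -, -, hdvd, -⟩ := ih
      obtain ⟨hirr, hu, hcomax⟩ := next_spec (go n).2 hcu
      rw [hgoS n]
      refine ⟨?_, hirr, hu, ?_, ?_⟩
      · rw [map_mul]
        refine hcu.mul ?_
        obtain ⟨u, hu', -⟩ := hu
        exact hu' ▸ u.isUnit
      · intro m hm
        rcases Nat.lt_or_ge m (n + 1) with h | h
        · exact dvd_mul_of_dvd_left (hdvd m (Nat.lt_succ_iff.mp h)) _
        · have : m = n + 1 := le_antisymm hm h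
          rw [this, hgoS n]
          exact dvd_mul_left _ _
      · intro m hm
        have hd := Ideal.span_singleton_le_span_singleton.mpr (hdvd m (Nat.lt_succ_iff.mp hm))
        rw [eq_top_iff, ← hcomax]
        exact sup_le_sup_left hd _
  refine ⟨fun n => (go n).1, fun n => (inv n).2.1, ?_, fun n => (inv n).2.2.1⟩
  intro m n hmn
  rcases Nat.lt_or_gt_of_ne hmn with h | h
  · rw [sup_comm]
    exact (inv n).2.2.2.2 m h
  · exact (inv m).2.2.2.2 n h
end

section
/- Let R be a Furstenberg domain having at least one and only finitely many irreducibles up to associates, say f_1, ..., f_n. Then there is a nonzero ideal I of R with 1 + I ⊆ R^×; in particular #R^× = #R. -/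
theorem stmt_11 (R : Type*) [CommRing R] [IsDomain R]
    (hF : ∀ x : R, x ≠ 0 → ¬ IsUnit x → ∃ f : R, Irreducible f ∧ f ∣ x)
    (hne : ∃ x : R, Irreducible x)
    (hfin : {J : Ideal R | ∃ f : R, Irreducible f ∧ J = Ideal.span {f}}.Finite) :
    (∃ I : Ideal R, I ≠ ⊥ ∧ ∀ x ∈ I, IsUnit (1 + x)) ∧
      Cardinal.mk Rˣ = Cardinal.mk R := by
  classical
  obtain ⟨f0, hf0⟩ := hne
  set S := hfin.toFinset with hS
  have hmem : ∀ J ∈ S, ∃ f : R, Irreducible f ∧ J = Ideal.span {f} := by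
    intro J hJ
    simpa using hfin.mem_toFinset.mp hJ
  choose g hg1 hg2 using hmem
  set P : R := ∏ J ∈ S.attach, g J J.2 with hPdef
  have hP0 : P ≠ 0 := Finset.prod_ne_zero_iff.mpr (fun J _ => (hg1 J J.2).ne_zero)
  have hdvd : ∀ f : R, Irreducible f → f ∣ P := by
    intro f hf
    have hJ : Ideal.span {f} ∈ S := hfin.mem_toFinset.mpr ⟨f, hf, rfl⟩
    have hassoc : Associated f (g _ hJ) := by
      have h2 := hg2 _ hJ
      rwa [Ideal.span_singleton_eq_span_singleton] at h2
    exact hassoc.dvd.trans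
      (Finset.dvd_prod_of_mem _ (Finset.mem_attach S ⟨_, hJ⟩))
  have hunit : ∀ x : R, IsUnit (1 + x * P) := by
    intro x
    by_contra h
    rcases eq_or_ne (1 + x * P) 0 with h0 | h0
    · have : f0 ∣ (1 : R) := by
        have h1 : f0 ∣ x * P := Dvd.dvd.mul_left (hdvd f0 hf0) x
        have h2 : (1 : R) = -(x * P) := by linear_combination h0
        rw [h2]
        exact h1.neg_right
      exact hf0.not_isUnit (isUnit_of_dvd_one this)
    · obtain ⟨f, hf, hfd⟩ := hF _ h0 h
      have h1 : f ∣ x * P := Dvd.dvd.mul_left (hdvd f hf) x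
      have : f ∣ (1 : R) := by simpa using Dvd.dvd.sub hfd h1
      exact hf.not_isUnit (isUnit_of_dvd_one this)
  constructor
  · refine ⟨Ideal.span {P}, ?_, ?_⟩
    · simpa [Ideal.span_singleton_eq_bot] using hP0
    · intro x hx
      obtain ⟨c, rfl⟩ := Ideal.mem_span_singleton.mp hx
      simpa [mul_comm] using hunit c
  · apply le_antisymm
    · exact Cardinal.mk_le_of_injective (f := fun u : Rˣ => (u : R)) (fun _ _ h => Units.ext h)
    · refine Cardinal.mk_le_of_injective (f := fun x : R => (hunit x).unit) ?_
      intro x y hxy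
      have : (1 : R) + x * P = 1 + y * P := by
        have := congrArg (fun u : Rˣ => (u : R)) hxy
        simpa using this
      have hxp : x * P = y * P := by linear_combination this
      exact mul_right_cancel₀ hP0 hxp
end

section
/- For a Dedekind domain R that is not a field, the following are equivalent: (i) R has zero Jacobson radical; (ii) R has infinitely many maximal ideals; (iii) R has infinitely many atoms (pairwise nonassociate irreducibles). -/
open IsDedekindDomain

/-- A nonzero element of a Dedekind domain lies in only finitely many maximal ideals. -/
lemma finite_maximals_mem {R : Type*} [CommRing R] [IsDomain R] [IsDedekindDomain R]
    {x : R} (hx : x ≠ 0) (hnf : ¬ IsField R) :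
    {M : Ideal R | M.IsMaximal ∧ x ∈ M}.Finite := by
  have hspan : (Ideal.span {x} : Ideal R) ≠ 0 := by
    simpa [Ideal.span_singleton_eq_bot] using hx
  have hfin := Ideal.finite_factors hspan
  have himg := hfin.image (fun v : HeightOneSpectrum R => v.asIdeal)
  refine himg.subset ?_
  rintro M ⟨hM, hxM⟩
  have hMbot : M ≠ ⊥ := Ring.ne_bot_of_isMaximal_of_not_isField hM hnf
  refine ⟨⟨M, hM.isPrime, hMbot⟩, ?_, rfl⟩
  simp only [Set.mem_setOf_eq, Ideal.dvd_iff_le]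
  exact (Ideal.span_singleton_le_iff_mem M).mpr hxM

theorem stmt_16 (R : Type*) [CommRing R] [IsDomain R] [IsDedekindDomain R]
    (hnf : ¬ IsField R) :
    (Ideal.jacobson (⊥ : Ideal R) = ⊥ ↔ {M : Ideal R | M.IsMaximal}.Infinite) ∧
      ({M : Ideal R | M.IsMaximal}.Infinite ↔
        {J : Ideal R | ∃ f : R, Irreducible f ∧ J = Ideal.span {f}}.Infinite) := by
  constructor
  · constructor
    · -- jacobson ⊥ = ⊥ → infinitely many maximal ideals
      intro hjac
      by_contra hfin
      rw [Set.not_infinite] at hfin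
      -- choose a nonzero element in each maximal ideal, take the product
      set s := hfin.toFinset with hs
      have hchoice : ∀ M : Ideal R, ∃ a : R, M ∈ s → a ∈ M ∧ a ≠ 0 := by
        intro M
        by_cases hM : M ∈ s
        · have hMmax : M.IsMaximal := by simpa [hs] using hM
          have hMbot : M ≠ ⊥ := Ring.ne_bot_of_isMaximal_of_not_isField hMmax hnf
          obtain ⟨a, haM, ha0⟩ := Submodule.exists_mem_ne_zero_of_ne_bot hMbot
          exact ⟨a, fun _ => ⟨haM, ha0⟩⟩
        · exact ⟨1, fun h => absurd h hM⟩
      choose y hy using hchoice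
      set x := ∏ M ∈ s, y M with hxdef
      have hx0 : x ≠ 0 := by
        rw [hxdef]
        exact Finset.prod_ne_zero_iff.mpr fun M hM => (hy M hM).2
      have hxmem : x ∈ Ideal.jacobson (⊥ : Ideal R) := by
        rw [Ideal.jacobson]
        rw [Ideal.mem_sInf]
        rintro M ⟨-, hMmax⟩
        have hMs : M ∈ s := by simpa [hs] using hMmax
        obtain ⟨c, hc⟩ := Finset.dvd_prod_of_mem y hMs
        rw [hxdef, hc]
        exact Ideal.mul_mem_right _ _ (hy M hMs).1
      rw [hjac, Ideal.mem_bot] at hxmem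
      exact hx0 hxmem
    · -- infinitely many maximal ideals → jacobson ⊥ = ⊥
      intro hinf
      rw [eq_bot_iff]
      intro x hx
      rw [Ideal.mem_bot]
      by_contra hx0
      have hsub : {M : Ideal R | M.IsMaximal} ⊆ {M : Ideal R | M.IsMaximal ∧ x ∈ M} := by
        intro M hM
        refine ⟨hM, ?_⟩
        rw [Ideal.jacobson, Ideal.mem_sInf] at hx
        exact hx ⟨bot_le, hM⟩
      exact hinf (Set.Finite.subset (finite_maximals_mem hx0 hnf) hsub)
  · constructor
    · -- infinitely many maximal ideals → infinitely many atoms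
      intro hinf
      by_contra hfin
      rw [Set.not_infinite] at hfin
      apply hinf
      have hcover : {M : Ideal R | M.IsMaximal} ⊆
          ⋃ J ∈ {J : Ideal R | ∃ f : R, Irreducible f ∧ J = Ideal.span {f}},
            {M : Ideal R | M.IsMaximal ∧ J ≤ M} := by
        intro M hM
        have hMmax : M.IsMaximal := hM
        have hMbot : M ≠ ⊥ := Ring.ne_bot_of_isMaximal_of_not_isField hMmax hnf
        obtain ⟨a, haM, ha0⟩ := Submodule.exists_mem_ne_zero_of_ne_bot hMbot
        obtain ⟨g, hgirr, hgassoc⟩ := WfDvdMonoid.exists_factors a ha0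
        have hprodM : g.prod ∈ M := by
          obtain ⟨u, hu⟩ := hgassoc
          have : g.prod = a * (u⁻¹ : Rˣ) := by
            rw [← hu]; rw [mul_assoc]; simp
          rw [this]
          exact Ideal.mul_mem_right _ _ haM
        obtain ⟨f, hfg, hfM⟩ :=
          (hMmax.isPrime.multiset_prod_mem_iff_exists_mem g).mp hprodM
        refine Set.mem_biUnion ⟨f, hgirr f hfg, rfl⟩ ?_
        exact ⟨hMmax, (Ideal.span_singleton_le_iff_mem M).mpr hfM⟩
      refine Set.Finite.subset (Set.Finite.biUnion hfin ?_) hcover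
      rintro J ⟨f, hfirr, rfl⟩
      have hf0 : f ≠ 0 := hfirr.ne_zero
      refine (finite_maximals_mem hf0 hnf).subset ?_
      rintro M ⟨hM, hle⟩
      exact ⟨hM, (Ideal.span_singleton_le_iff_mem M).mp hle⟩
    · -- infinitely many atoms → infinitely many maximal ideals
      intro hinf
      by_contra hfin
      rw [Set.not_infinite] at hfin
      apply hinf
      -- finitely many maximal ideals → finitely many primes → PID
      have hprimes : {I : Ideal R | I.IsPrime}.Finite := by
        refine Set.Finite.subset (hfin.union (Set.finite_singleton ⊥)) ?_
        intro P hP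
        rcases eq_or_ne P ⊥ with h | h
        · exact Or.inr h
        · exact Or.inl (hP.isMaximal h)
      have hpid : IsPrincipalIdealRing R := IsPrincipalIdealRing.of_finite_primes hprimes
      refine hfin.subset ?_
      rintro J ⟨f, hfirr, rfl⟩
      exact PrincipalIdealRing.isMaximal_of_irreducible hfirr
end

section
/- Let R be an infinite commutative ring with #R > #R^×. Then R has infinitely many maximal ideals. -/
open Cardinal

/-- A finite product of types each of cardinality `< c`, with `c` infinite, has
cardinality `< c`. -/
lemma mk_pi_lt_of_lt {ι : Type u} [Fintype ι] {α : ι → Type u} {c : Cardinal.{u}}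
    (hc : ℵ₀ ≤ c) (h : ∀ i, #(α i) < c) : #(Π i, α i) < c := by
  classical
  set κ : Cardinal.{u} := Finset.univ.sup (fun i => #(α i)) with hκ
  have hκc : κ < c := by
    rw [hκ, Finset.sup_lt_iff (Cardinal.aleph0_pos.trans_le hc)]
    exact fun i _ => h i
  have h1 : #(Π i, α i) ≤ κ ^ (#ι) := by
    rw [Cardinal.mk_pi, ← Cardinal.prod_const']
    exact Cardinal.prod_le_prod _ _ fun i =>
      Finset.le_sup (f := fun i => #(α i)) (Finset.mem_univ i)
  rcases eq_or_lt_of_le hc with hc' | hc'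
  · have : κ ^ (#ι) < ℵ₀ := by
      rw [Cardinal.mk_fintype]
      exact Cardinal.power_lt_aleph0 (hc' ▸ hκc) (Cardinal.nat_lt_aleph0 _)
    exact h1.trans_lt (hc' ▸ this)
  · have h2 : κ ^ (#ι) ≤ max κ ℵ₀ := by
      rw [Cardinal.mk_fintype]
      exact Cardinal.power_nat_le_max
    exact h1.trans_lt (h2.trans_lt (max_lt hκc hc'))

theorem stmt_19 (R : Type*) [CommRing R] [Infinite R]
    (hcard : Cardinal.mk Rˣ < Cardinal.mk R) :
    {M : Ideal R | M.IsMaximal}.Infinite := by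
  classical
  by_contra hfin
  rw [Set.not_infinite] at hfin
  haveI : Finite {M : Ideal R // M.IsMaximal} := hfin.to_subtype
  set ι := {M : Ideal R // M.IsMaximal} with hι
  set f : ι → Ideal R := fun M => (M : Ideal R) with hf
  have hpair : Pairwise (Function.onFun IsCoprime f) := by
    intro M N hne
    rw [Function.onFun, Ideal.isCoprime_iff_sup_eq]
    exact Ideal.IsMaximal.coprime_of_ne M.2 N.2 (Subtype.coe_injective.ne hne)
  set J : Ideal R := ⨅ i : ι, f i with hJ
  -- membership in all maximal ideals puts one in the Jacobson radical of ⊥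
  have hmemJac : ∀ x : R, (∀ i : ι, x ∈ f i) → x ∈ Ideal.jacobson (⊥ : Ideal R) := by
    intro x hx
    rw [Ideal.jacobson, Submodule.mem_sInf]
    rintro I ⟨-, hI⟩
    exact hx ⟨I, hI⟩
  -- key: an element which is a unit modulo every maximal ideal is a unit
  have key : ∀ x : R, (∀ i : ι, IsUnit (Ideal.Quotient.mk (f i) x)) → IsUnit x := by
    intro x hx
    obtain ⟨y, hy⟩ := Ideal.quotientInfToPiQuotient_surj hpair
      (fun i => ((hx i).unit⁻¹ : (R ⧸ f i)ˣ))
    obtain ⟨s, rfl⟩ := Ideal.Quotient.mk_surjective y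
    have hs : ∀ i : ι, Ideal.Quotient.mk (f i) s = ((hx i).unit⁻¹ : (R ⧸ f i)ˣ) := by
      intro i
      rw [← Ideal.quotientInfToPiQuotient_mk' f s i, hy]
    have hxs : x * s - 1 ∈ Ideal.jacobson (⊥ : Ideal R) := by
      apply hmemJac
      intro i
      rw [← Ideal.Quotient.eq_zero_iff_mem, map_sub, map_mul, hs i, map_one,
        (hx i).mul_val_inv, sub_self]
    exact isUnit_of_mul_isUnit_left (Ideal.isUnit_of_sub_one_mem_jacobson_bot _ hxs)
  -- the unit group surjects onto the unit group of each residue field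
  have hsurj : ∀ i : ι,
      Function.Surjective (Units.map (Ideal.Quotient.mk (f i)).toMonoidHom) := by
    intro i u
    obtain ⟨y, hy⟩ := Ideal.quotientInfToPiQuotient_surj hpair
      (Function.update (fun j : ι => (1 : R ⧸ f j)) i (u : R ⧸ f i))
    obtain ⟨r, rfl⟩ := Ideal.Quotient.mk_surjective y
    have hr : ∀ j : ι, Ideal.Quotient.mk (f j) r
        = Function.update (fun j : ι => (1 : R ⧸ f j)) i (u : R ⧸ f i) j := by
      intro j
      rw [← Ideal.quotientInfToPiQuotient_mk' f r j, hy]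
    have hru : IsUnit r := by
      apply key
      intro j
      rw [hr j]
      by_cases hji : j = i
      · subst hji; rw [Function.update_self]; exact u.isUnit
      · rw [Function.update_of_ne hji]; exact isUnit_one
    refine ⟨hru.unit, Units.ext ?_⟩
    have : Ideal.Quotient.mk (f i) r = (u : R ⧸ f i) := by
      rw [hr i, Function.update_self]
    simpa using this
  -- each residue field has cardinality < #R
  have hQlt : ∀ i : ι, #(R ⧸ f i) < #R := by
    intro i
    haveI : (f i).IsMaximal := i.2
    letI : Field (R ⧸ f i) := Ideal.Quotient.field (f i)
    have h1 : #(R ⧸ f i)ˣ ≤ #Rˣ := Cardinal.mk_le_of_surjective (hsurj i)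
    have h2 : #(R ⧸ f i) ≤ #(R ⧸ f i)ˣ + 1 := by
      rw [← Cardinal.mk_option]
      apply Cardinal.mk_le_of_injective
        (f := fun x : R ⧸ f i =>
          if h : IsUnit x then (some h.unit : Option (R ⧸ f i)ˣ) else none)
      intro a b hab
      by_cases ha : IsUnit a <;> by_cases hb : IsUnit b <;>
        simp only [ha, hb, dif_pos, dif_neg, not_false_iff, Option.some.injEq,
          reduceCtorEq] at hab
      · calc a = ↑ha.unit := ha.unit_spec.symm
          _ = ↑hb.unit := by rw [hab]
          _ = b := hb.unit_spec
      · have ha0 : a = 0 := by rwa [isUnit_iff_ne_zero, not_not] at ha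
        have hb0 : b = 0 := by rwa [isUnit_iff_ne_zero, not_not] at hb
        rw [ha0, hb0]
    refine h2.trans_lt (Cardinal.add_lt_of_lt (Cardinal.aleph0_le_mk R)
      (h1.trans_lt hcard) ?_)
    exact lt_of_lt_of_le Cardinal.one_lt_aleph0 (Cardinal.aleph0_le_mk R)
  -- hence the quotient by J has cardinality < #R
  haveI : Fintype ι := Fintype.ofFinite ι
  have hQJ : #(R ⧸ J) < #R := by
    refine (Cardinal.mk_le_of_injective (Ideal.quotientInfToPiQuotient_inj f)).trans_lt ?_
    exact mk_pi_lt_of_lt (Cardinal.aleph0_le_mk R) hQlt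
  -- J itself injects into the unit group via j ↦ 1 + j
  have hJlt : #J < #R := by
    have hu : ∀ j : J, IsUnit ((1 : R) + j) := by
      intro j
      apply Ideal.isUnit_of_sub_one_mem_jacobson_bot
      have : (j : R) ∈ Ideal.jacobson (⊥ : Ideal R) :=
        hmemJac _ (fun i => Ideal.mem_iInf.mp j.2 i)
      simpa using this
    refine lt_of_le_of_lt (Cardinal.mk_le_of_injective
      (f := fun j : J => (hu j).unit) ?_) hcard
    intro a b hab
    have h1 : (1 : R) + a = 1 + b := by
      simpa using congrArg Units.val hab
    exact Subtype.ext (add_left_cancel h1)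
  -- finally, R injects into (R ⧸ J) × J
  have hfinal : #R ≤ #(R ⧸ J) * #J := by
    have hs := Ideal.Quotient.mk_surjective (I := J)
    set s := Function.surjInv hs with hsdef
    have hsec : ∀ q, Ideal.Quotient.mk J (s q) = q := Function.surjInv_eq hs
    have hmem : ∀ x : R, x - s (Ideal.Quotient.mk J x) ∈ J := by
      intro x
      rw [← Ideal.Quotient.eq_zero_iff_mem, map_sub, hsec, sub_self]
    have hle : #R ≤ #((R ⧸ J) × J) := by
      apply Cardinal.mk_le_of_injective
        (f := fun x : R => ((Ideal.Quotient.mk J x : R ⧸ J),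
          (⟨x - s (Ideal.Quotient.mk J x), hmem x⟩ : J)))
      intro a b hab
      simp only [Prod.mk.injEq, Subtype.mk.injEq] at hab
      obtain ⟨h1, h2⟩ := hab
      rw [h1] at h2
      exact sub_left_injective h2
    simpa [Cardinal.mk_prod] using hle
  exact absurd (hfinal.trans_lt (Cardinal.mul_lt_of_lt (Cardinal.aleph0_le_mk R) hQJ hJlt))
    (lt_irrefl _)
end
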